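/- Let K ⊆ X be a compact set, and let (A_n) be a sequence of closed subsets of K with σ(A_n) = A_n and γ(A_n) ≥ k for every n. Then limsup_n A_n is closed, σ-invariant, and γ(limsup_n A_n) ≥ k. -/

import Mathlib

open Filter Topology

/-- Kuratowski limit superior of a sequence of subsets of a metric space. -/
def SeqLimsup {X : Type*} [MetricSpace X] (A : ℕ → Set X) : Set X :=
  {x | ∃ φ : ℕ → ℕ, StrictMono φ ∧
    ∃ y : ℕ → X, (∀ n, y n ∈ A (φ n)) ∧ Tendsto y atTop (𝓝 x)}

/-- The Krasnoselskii genus of a set `A` with respect to an involution `σ`. -/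
noncomputable def genus {X : Type*} [MetricSpace X] (σ : X → X) (A : Set X) : ℕ∞ :=
  sInf {n : ℕ∞ | ∃ m : ℕ, n = (m : ℕ∞) ∧ ∃ f : X → (Fin m → ℝ),
    ContinuousOn f A ∧ (∀ x ∈ A, f x ≠ 0) ∧ ∀ x ∈ A, f (σ x) = - f x}

lemma seqLimsup_eq {X : Type*} [MetricSpace X] (A : ℕ → Set X) :
    SeqLimsup A = ⋂ N : ℕ, closure (⋃ n ∈ Set.Ici N, A n) := by
  ext x
  constructor
  · rintro ⟨φ, hφ, y, hy, hyx⟩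
    simp only [Set.mem_iInter]
    intro N
    refine mem_closure_of_tendsto hyx ?_
    filter_upwards [eventually_ge_atTop N] with n hn
    exact Set.mem_biUnion (Set.mem_Ici.mpr (le_trans hn hφ.le_apply)) (hy n)
  · intro h
    simp only [Set.mem_iInter] at h
    have key : ∀ (p : ℕ) (j : ℕ), ∃ q : ℕ × X,
        p < q.1 ∧ q.2 ∈ A q.1 ∧ dist q.2 x < 1 / (j + 1) := by
      intro p j
      have h2 := (Metric.mem_closure_iff).mp (h (p + 1)) (1 / (j + 1)) (by positivity)
      obtain ⟨y, hy, hd⟩ := h2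
      simp only [Set.mem_iUnion, Set.mem_Ici] at hy
      obtain ⟨n, hn, hyn⟩ := hy
      exact ⟨(n, y), by omega, hyn, by rwa [dist_comm]⟩
    choose g hg1 hg2 hg3 using key
    set s : ℕ → ℕ × X := fun j => Nat.rec (g 0 0) (fun j p => g p.1 (j + 1)) j with hs
    have hsucc : ∀ j, s (j + 1) = g (s j).1 (j + 1) := fun j => rfl
    have hmono : StrictMono (fun j => (s j).1) :=
      strictMono_nat_of_lt_succ (fun j => by rw [hsucc]; exact hg1 _ _)
    have hmem : ∀ j, (s j).2 ∈ A (s j).1 := by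
      intro j
      cases j with
      | zero => exact hg2 0 0
      | succ j => rw [hsucc]; exact hg2 _ _
    have hdist : ∀ j, dist (s j).2 x < 1 / (j + 1) := by
      intro j
      cases j with
      | zero => exact hg3 0 0
      | succ j => rw [hsucc]; exact hg3 _ _
    refine ⟨fun j => (s j).1, hmono, fun j => (s j).2, hmem, ?_⟩
    rw [Metric.tendsto_atTop]
    intro ε hε
    obtain ⟨N, hN⟩ := exists_nat_one_div_lt hε
    refine ⟨N, fun n hn => (hdist n).trans_le (le_trans ?_ hN.le)⟩
    have h1 : (N : ℝ) + 1 ≤ n + 1 := by exact_mod_cast Nat.succ_le_succ hn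
    exact one_div_le_one_div_of_le (by positivity) h1

lemma mem_seqLimsup_sigma {X : Type*} [MetricSpace X] {σ : X → X} (hσc : Continuous σ)
    {A : ℕ → Set X} (hAinv : ∀ n, σ '' A n = A n) {x : X}
    (hx : x ∈ SeqLimsup A) : σ x ∈ SeqLimsup A := by
  obtain ⟨φ, hφ, y, hy, hyx⟩ := hx
  refine ⟨φ, hφ, fun n => σ (y n), fun n => ?_, (hσc.tendsto x).comp hyx⟩
  rw [← hAinv (φ n)]
  exact Set.mem_image_of_mem σ (hy n)

/-- Let `σ` be an isometric involution, `K ⊆ X` compact, and `(A_n)` a sequence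
of closed subsets of `K` with `σ(A_n) = A_n` and `γ(A_n) ≥ k` for every `n`.
Then `limsup_n A_n` is closed, `σ`-invariant, and `γ(limsup_n A_n) ≥ k`. -/
theorem genus_seqLimsup {X : Type*} [MetricSpace X]
    (σ : X → X) (hσiso : Isometry σ) (hσinv : ∀ x, σ (σ x) = x)
    (K : Set X) (hK : IsCompact K)
    (A : ℕ → Set X) (hAclosed : ∀ n, IsClosed (A n)) (hAsub : ∀ n, A n ⊆ K)
    (hAinv : ∀ n, σ '' A n = A n)
    (k : ℕ) (hgen : ∀ n, (k : ℕ∞) ≤ genus σ (A n)) :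
    IsClosed (SeqLimsup A) ∧ σ '' SeqLimsup A = SeqLimsup A ∧
    (k : ℕ∞) ≤ genus σ (SeqLimsup A) := by
  set L := SeqLimsup A with hL
  have hclosed : IsClosed L := by
    rw [hL, seqLimsup_eq]
    exact isClosed_iInter (fun N => isClosed_closure)
  have hσmem : ∀ x ∈ L, σ x ∈ L := fun x hx =>
    mem_seqLimsup_sigma hσiso.continuous hAinv hx
  have hinv : σ '' L = L := by
    apply Set.Subset.antisymm
    · rintro _ ⟨x, hx, rfl⟩; exact hσmem x hx
    · intro x hx
      exact ⟨σ x, hσmem x hx, hσinv x⟩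
  refine ⟨hclosed, hinv, ?_⟩
  have hLK : L ⊆ K := by
    rintro x ⟨φ, hφ, y, hy, hyx⟩
    exact hK.isClosed.mem_of_tendsto hyx (Eventually.of_forall fun n => hAsub _ (hy n))
  have hLcompact : IsCompact L := hK.of_isClosed_subset hclosed hLK
  by_contra hcon
  push_neg at hcon
  obtain ⟨s, hsmem, hslt⟩ := sInf_lt_iff.mp hcon
  obtain ⟨m, rfl, f, hfcont, hfne, hfodd⟩ := hsmem
  -- Tietze extension
  have : ∃ F : C(X, Fin m → ℝ), ∀ x ∈ L, F x = f x := by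
    let fc : C(L, Fin m → ℝ) := ⟨L.restrict f, continuousOn_iff_continuous_restrict.mp hfcont⟩
    obtain ⟨F, hF⟩ := fc.exists_restrict_eq hclosed
    refine ⟨F, fun x hx => ?_⟩
    have := congrFun (congrArg ContinuousMap.toFun hF) ⟨x, hx⟩
    exact this
  obtain ⟨F, hF⟩ := this
  set G : X → Fin m → ℝ := fun x => (2 : ℝ)⁻¹ • (F x - F (σ x)) with hG
  have hGcont : Continuous G := by
    exact (F.continuous.sub (F.continuous.comp hσiso.continuous)).const_smul (2 : ℝ)⁻¹
  have hGodd : ∀ x, G (σ x) = - G x := by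
    intro x
    simp only [hG, hσinv x]
    module
  have hGL : ∀ x ∈ L, G x = f x := by
    intro x hx
    have h1 : F x = f x := hF x hx
    have h2 : F (σ x) = f (σ x) := hF _ (hσmem x hx)
    rw [hG]
    simp only [h1, h2, hfodd x hx]
    module
  set U : Set X := {x | G x ≠ 0} with hU
  have hUopen : IsOpen U := isOpen_compl_iff.mpr (isClosed_singleton.preimage hGcont)
  have hLU : L ⊆ U := fun x hx => by
    rw [hU, Set.mem_setOf_eq, hGL x hx]; exact hfne x hx
  have hNU : ∃ N, A N ⊆ U := by
    by_contra hno
    push_neg at hno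
    choose x hxA hxU using fun N => Set.not_subset.mp (hno N)
    obtain ⟨a, haK, φ, hφ, hφt⟩ := hK.tendsto_subseq (fun n => hAsub n (hxA n))
    have haL : a ∈ L := ⟨φ, hφ, fun n => x (φ n), fun n => hxA (φ n), hφt⟩
    have : a ∈ Uᶜ := (hUopen.isClosed_compl).mem_of_tendsto hφt
      (Eventually.of_forall fun n => hxU (φ n))
    exact this (hLU haL)
  obtain ⟨N, hNsub⟩ := hNU
  have : genus σ (A N) ≤ (m : ℕ∞) := by
    apply sInf_le
    exact ⟨m, rfl, G, hGcont.continuousOn, fun x hx => hNsub hx, fun x hx => hGodd x⟩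
  exact absurd (le_trans (hgen N) this) (not_le.mpr hslt)
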